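/- Let s² > 0, c > 0, 𝕹 > 0, and let X be a real random variable with the exponential distribution of mean s² (density (1/s²)e^{−x/s²} on [0,∞)). Then E[ cX / (cX + 𝕹) ] = 1 − ρ · e^{ρ} · E₁(ρ), where ρ = 𝕹/(c·s²) and E₁(z) = ∫_z^∞ t^{−1} e^{−t} dt. -/

import Mathlib

open MeasureTheory ProbabilityTheory
open scoped ENNReal NNReal

lemma integral_comp_add_right_Ioi_aux (g : ℝ → ℝ) (a d : ℝ) :
    ∫ x in Set.Ioi a, g (x + d) = ∫ x in Set.Ioi (a + d), g x := by
  rw [← integral_indicator measurableSet_Ioi, ← integral_indicator measurableSet_Ioi,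
    ← integral_add_right_eq_self (Set.indicator (Set.Ioi (a + d)) g) d]
  congr 1
  ext x
  simp only [Set.indicator, Set.mem_Ioi, add_lt_add_iff_right]

/-- Mean optimal DPC parameter over Rayleigh fading: if `X` is exponential with mean `s²`,
then `E[cX/(cX+𝕹)] = 1 − ρ e^ρ E₁(ρ)` with `ρ = 𝕹/(c·s²)`. -/
theorem mean_optimal_dpc_parameter {Ω : Type*} [MeasurableSpace Ω] (μ : Measure Ω)
    [IsProbabilityMeasure μ]
    (s2 c 𝕹 : ℝ) (hs2 : 0 < s2) (hc : 0 < c) (h𝕹 : 0 < 𝕹)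
    (X : Ω → ℝ) (hX : Measurable X)
    (hlaw : μ.map X = expMeasure (1 / s2))
    (ρ : ℝ) (hρ : ρ = 𝕹 / (c * s2)) :
    μ[fun ω => c * X ω / (c * X ω + 𝕹)]
      = 1 - ρ * Real.exp ρ * ∫ t in Set.Ioi ρ, t⁻¹ * Real.exp (-t) := by
  have hρpos : 0 < ρ := by rw [hρ]; positivity
  set r : ℝ := 1 / s2 with hr_def
  have hr : 0 < r := by positivity
  have hg_m : Measurable fun x : ℝ => c * x / (c * x + 𝕹) :=
    (measurable_const.mul measurable_id).div
      ((measurable_const.mul measurable_id).add measurable_const)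
  -- transfer to the law
  have h1 : μ[fun ω => c * X ω / (c * X ω + 𝕹)]
      = ∫ x, c * x / (c * x + 𝕹) ∂(expMeasure r) := by
    rw [← hlaw, integral_map hX.aemeasurable (by rw [hlaw]; exact hg_m.aestronglyMeasurable)]
  rw [h1]
  -- expMeasure as withDensity
  have h2 : expMeasure r
      = volume.withDensity (fun x => ((exponentialPDFReal r x).toNNReal : ℝ≥0∞)) := rfl
  rw [h2, integral_withDensity_eq_integral_smul
      ((measurable_exponentialPDFReal r).real_toNNReal) _]
  have hpdf : ∀ x : ℝ, exponentialPDFReal r x = if 0 ≤ x then r * Real.exp (-(r * x)) else 0 := by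
    intro x
    rw [exponentialPDFReal, gammaPDFReal]
    simp [Real.Gamma_one, Real.rpow_one]
  have h3 : (fun x : ℝ => (exponentialPDFReal r x).toNNReal • (c * x / (c * x + 𝕹)))
      = Set.indicator (Set.Ioi 0)
          (fun x => r * Real.exp (-(r * x)) * (c * x / (c * x + 𝕹))) := by
    funext x
    rw [NNReal.smul_def, Real.coe_toNNReal _ (exponentialPDFReal_nonneg hr x), hpdf x]
    rcases lt_trichotomy x 0 with hx | hx | hx
    · rw [if_neg (not_le.mpr hx), Set.indicator_of_notMem (by simpa using hx.not_gt)]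
      simp
    · subst hx
      rw [Set.indicator_of_notMem (by simp)]
      simp
    · rw [if_pos hx.le, Set.indicator_of_mem (Set.mem_Ioi.mpr hx), smul_eq_mul]
  rw [h3, integral_indicator measurableSet_Ioi]
  -- pointwise decomposition on `Ioi 0`
  have key : ∀ x ∈ Set.Ioi (0 : ℝ),
      r * Real.exp (-(r * x)) * (c * x / (c * x + 𝕹))
        = r * Real.exp (-(r * x))
          - r * ρ * Real.exp ρ * ((r * x + ρ)⁻¹ * Real.exp (-(r * x + ρ))) := by
    intro x hx
    have hx0 : 0 < x := hx
    have hd : (0:ℝ) < c * x + 𝕹 := by positivity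
    have hrxρ : r * x + ρ = (c * x + 𝕹) / (c * s2) := by
      rw [hρ, hr_def]; field_simp
    have hexp : Real.exp (-(r * x + ρ)) = Real.exp (-(r * x)) * Real.exp (-ρ) := by
      rw [← Real.exp_add]; ring_nf
    rw [hexp, hrxρ, Real.exp_neg ρ]
    have hE : Real.exp ρ ≠ 0 := (Real.exp_pos ρ).ne'
    rw [hρ]
    field_simp
    ring
  rw [setIntegral_congr_fun measurableSet_Ioi key]
  -- integrability
  have hA : IntegrableOn (fun x : ℝ => r * Real.exp (-(r * x))) (Set.Ioi 0) := by
    have := (exp_neg_integrableOn_Ioi 0 hr).const_mul r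
    simp only [neg_mul] at this; exact this
  have hB : IntegrableOn
      (fun x : ℝ => r * ρ * Real.exp ρ * ((r * x + ρ)⁻¹ * Real.exp (-(r * x + ρ))))
      (Set.Ioi 0) := by
    refine Integrable.mono hA ?_ ?_
    · refine Measurable.aestronglyMeasurable ?_
      exact (measurable_const.mul
        (((measurable_const.mul measurable_id).add measurable_const).inv.mul
          (((measurable_const.mul measurable_id).add measurable_const).neg.exp)))
    · filter_upwards [ae_restrict_mem measurableSet_Ioi] with x hx
      have hx0 : 0 < x := hx
      have hden : 0 < r * x + ρ := by positivity
      have hfrac : ρ * (r * x + ρ)⁻¹ ≤ 1 := by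
        rw [← div_eq_mul_inv, div_le_one hden]
        nlinarith [mul_pos hr hx0]
      have hexp' : Real.exp (-(r * x + ρ)) = Real.exp (-(r * x)) * Real.exp (-ρ) := by
        rw [← Real.exp_add]; ring_nf
      have h1' : (0:ℝ) ≤ r * ρ * Real.exp ρ * ((r * x + ρ)⁻¹ * Real.exp (-(r * x + ρ))) := by
        positivity
      have h2' : (0:ℝ) ≤ r * Real.exp (-(r * x)) := by positivity
      rw [Real.norm_of_nonneg h1', Real.norm_of_nonneg h2']
      have : r * ρ * Real.exp ρ * ((r * x + ρ)⁻¹ * Real.exp (-(r * x + ρ)))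
          = (r * Real.exp (-(r * x))) * (ρ * (r * x + ρ)⁻¹)
            * (Real.exp ρ * Real.exp (-ρ)) := by
        rw [hexp']; ring
      rw [this, ← Real.exp_add, add_neg_cancel, Real.exp_zero, mul_one]
      calc r * Real.exp (-(r * x)) * (ρ * (r * x + ρ)⁻¹)
          ≤ r * Real.exp (-(r * x)) * 1 := by
            apply mul_le_mul_of_nonneg_left hfrac h2'
        _ = r * Real.exp (-(r * x)) := mul_one _
  rw [integral_sub hA hB]
  -- first integral is 1
  have hI1 : ∫ x in Set.Ioi (0:ℝ), r * Real.exp (-(r * x)) = 1 := by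
    rw [integral_const_mul]
    have := integral_comp_mul_left_Ioi (fun x => Real.exp (-x)) 0 hr
    simp only [mul_zero, smul_eq_mul] at this
    rw [this, integral_exp_neg_Ioi_zero]
    field_simp
  -- second integral is ρ e^ρ ∫_{Ioi ρ} t⁻¹ e^{-t}
  have hI2 : ∫ x in Set.Ioi (0:ℝ),
      r * ρ * Real.exp ρ * ((r * x + ρ)⁻¹ * Real.exp (-(r * x + ρ)))
      = ρ * Real.exp ρ * ∫ t in Set.Ioi ρ, t⁻¹ * Real.exp (-t) := by
    rw [integral_const_mul]
    have hcomp := integral_comp_mul_left_Ioi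
      (fun u => (u + ρ)⁻¹ * Real.exp (-(u + ρ))) 0 hr
    simp only [mul_zero, smul_eq_mul] at hcomp
    rw [hcomp, integral_comp_add_right_Ioi_aux (fun t => t⁻¹ * Real.exp (-t)) 0 ρ, zero_add]
    field_simp
  rw [hI1, hI2]
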